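/- For every two-mode covariance matrix V whose lowest partially-transposed symplectic eigenvalue satisfies ν(V) ≤ 1, the coherent-state teleportation fidelity satisfies F(V) ≤ 1/(1 + ν(V)). -/

import Mathlib

open Matrix Real ComplexOrder

noncomputable section

def J2 : Matrix (Fin 2) (Fin 2) ℝ := !![0, 1; -1, 0]
def Z2 : Matrix (Fin 2) (Fin 2) ℝ := !![1, 0; 0, -1]
def J4 : Matrix (Fin 2 ⊕ Fin 2) (Fin 2 ⊕ Fin 2) ℝ := fromBlocks J2 0 0 J2

/-- A two-mode covariance matrix: real symmetric with `V + i𝒥 ⪰ 0`. -/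
def IsCovMat (V : Matrix (Fin 2 ⊕ Fin 2) (Fin 2 ⊕ Fin 2) ℝ) : Prop :=
  V.IsSymm ∧ (V.map (Complex.ofReal) + Complex.I • J4.map (Complex.ofReal)).PosSemidef

/-- Noise matrix N = Z A Z + Z C + Cᵀ Z + B of the Braunstein-Kimble protocol. -/
def noiseMat (V : Matrix (Fin 2 ⊕ Fin 2) (Fin 2 ⊕ Fin 2) ℝ) : Matrix (Fin 2) (Fin 2) ℝ :=
  Z2 * V.toBlocks₁₁ * Z2 + Z2 * V.toBlocks₁₂ + (V.toBlocks₁₂)ᵀ * Z2 + V.toBlocks₂₂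

/-- Coherent-state teleportation fidelity F = 2/√(4 + 2 Tr N + det N). -/
def Fid (V : Matrix (Fin 2 ⊕ Fin 2) (Fin 2 ⊕ Fin 2) ℝ) : ℝ :=
  2 / Real.sqrt (4 + 2 * (noiseMat V).trace + (noiseMat V).det)

def SigmaV (V : Matrix (Fin 2 ⊕ Fin 2) (Fin 2 ⊕ Fin 2) ℝ) : ℝ :=
  (V.toBlocks₁₁).det + (V.toBlocks₂₂).det - 2 * (V.toBlocks₁₂).det

/-- Lowest partially transposed symplectic eigenvalue ν. -/
def nuPT (V : Matrix (Fin 2 ⊕ Fin 2) (Fin 2 ⊕ Fin 2) ℝ) : ℝ :=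
  Real.sqrt ((SigmaV V - Real.sqrt ((SigmaV V)^2 - 4 * V.det)) / 2)

/-! ### Auxiliary lemmas -/

lemma Z2_mul_Z2 : Z2 * Z2 = 1 := by
  rw [Z2, Matrix.mul_fin_two]
  norm_num
  exact (Matrix.one_fin_two).symm

lemma Z2_transpose : Z2ᵀ = Z2 := by
  rw [Z2]
  ext i j
  fin_cases i <;> fin_cases j <;> simp

/-- Scalar facts from a 2×2 real PSD matrix. -/
lemma psd2 {X : Matrix (Fin 2) (Fin 2) ℝ} (hX : X.PosSemidef) :
    0 ≤ X 0 0 ∧ 0 ≤ X 1 1 ∧ X 0 1 = X 1 0 ∧ X 1 0 ^ 2 ≤ X 0 0 * X 1 1 := by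
  have hsym : X 0 1 = X 1 0 := by
    have := hX.1
    have h := congrFun (congrFun this 1) 0
    simpa [Matrix.conjTranspose_apply] using h
  have h00 := hX.dotProduct_mulVec_nonneg ![1, 0]
  have h11 := hX.dotProduct_mulVec_nonneg ![0, 1]
  simp [dotProduct, Matrix.mulVec, Fin.sum_univ_two] at h00 h11
  have hq : ∀ t : ℝ, 0 ≤ X 0 0 * (t * t) + (2 * X 1 0) * t + X 1 1 := by
    intro t
    have h := hX.dotProduct_mulVec_nonneg ![t, 1]
    simp [dotProduct, Matrix.mulVec, Fin.sum_univ_two] at h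
    have e : X 0 0 * (t * t) + (2 * X 1 0) * t + X 1 1
        = t * (X 0 0 * t + X 0 1) + (X 1 0 * t + X 1 1) := by rw [hsym]; ring
    rw [e]; exact h
  have hd := discrim_le_zero hq
  rw [discrim] at hd
  refine ⟨h00, h11, hsym, by nlinarith⟩

lemma det2_nonneg {X : Matrix (Fin 2) (Fin 2) ℝ} (hX : X.PosSemidef) : 0 ≤ X.det := by
  obtain ⟨h00, h11, hsym, hd⟩ := psd2 hX
  rw [Matrix.det_fin_two, hsym]
  nlinarith

/-- A 2×2 real PSD matrix with positive determinant is positive definite. -/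
lemma posdef2 {X : Matrix (Fin 2) (Fin 2) ℝ} (hX : X.PosSemidef) (hd : 0 < X.det) :
    X.PosDef := by
  have h := (by exact hX.1 : X.IsHermitian)
  have hsym : X 0 1 = X 1 0 := by
    have h' := congrFun (congrFun h 1) 0
    simpa [Matrix.conjTranspose_apply] using h'
  have h00 := hX.dotProduct_mulVec_nonneg ![1, 0]
  have h11 := hX.dotProduct_mulVec_nonneg ![0, 1]
  simp [dotProduct, Matrix.mulVec, Fin.sum_univ_two] at h00 h11
  rw [Matrix.det_fin_two, hsym] at hd
  have hprod : 0 < X 0 0 * X 1 1 := by nlinarith [sq_nonneg (X 1 0)]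
  have hx00 : 0 < X 0 0 := by
    rcases mul_pos_iff.mp hprod with ⟨h', _⟩ | ⟨h', _⟩
    · exact h'
    · linarith
  refine Matrix.PosDef.of_dotProduct_mulVec_pos h (fun x hx => ?_)
  have e : x ⬝ᵥ X *ᵥ x
      = (X 0 0 * (x 0) ^ 2 + 2 * X 1 0 * x 0 * x 1 + X 1 1 * (x 1) ^ 2) := by
    simp [dotProduct, Matrix.mulVec, Fin.sum_univ_two, hsym]
    ring
  have expand : X 0 0 * (X 0 0 * (x 0) ^ 2 + 2 * X 1 0 * x 0 * x 1 + X 1 1 * (x 1) ^ 2)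
      = (X 0 0 * x 0 + X 1 0 * x 1) ^ 2 + (X 0 0 * X 1 1 - X 1 0 * X 1 0) * (x 1) ^ 2 := by ring
  have key : 0 < X 0 0 * (x 0) ^ 2 + 2 * X 1 0 * x 0 * x 1 + X 1 1 * (x 1) ^ 2 := by
    rcases eq_or_ne (x 1) 0 with h1 | h1
    · have hx0 : x 0 ≠ 0 := by
        intro h0
        exact hx (funext fun i => by fin_cases i <;> simp [h0, h1])
      have : 0 < (x 0) ^ 2 := by positivity
      simp only [h1]
      nlinarith [mul_pos hx00 this]
    · have hx1sq : 0 < (x 1) ^ 2 := by positivity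
      nlinarith [expand, sq_nonneg (X 0 0 * x 0 + X 1 0 * x 1), mul_pos hd hx1sq, hx00]
  simpa only [star_trivial, e] using key

open scoped MatrixOrder

/-- trace(adjugate S * T) bounds for 2×2 real PSD matrices. -/
lemma tau_facts {S T : Matrix (Fin 2) (Fin 2) ℝ} (hS : S.PosSemidef) (hT : T.PosSemidef) :
    0 ≤ (S.adjugate * T).trace ∧
    4 * S.det * T.det ≤ (S.adjugate * T).trace ^ 2 := by
  have hadj : S.adjugate = !![0,1;-1,0] * S * (!![0,1;-1,0] : Matrix (Fin 2) (Fin 2) ℝ)ᴴ := by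
    rw [Matrix.adjugate_fin_two]
    have hsym : S 0 1 = S 1 0 := by
      have h' := congrFun (congrFun hS.1 1) 0
      simpa [Matrix.conjTranspose_apply] using h'
    ext i j
    fin_cases i <;> fin_cases j <;>
      simp [Matrix.mul_apply, Fin.sum_univ_two, Matrix.conjTranspose_apply, hsym,
        Matrix.vecMul, Matrix.vecHead, Matrix.vecTail, dotProduct]
  have hA : S.adjugate.PosSemidef := by
    rw [hadj]; exact hS.mul_mul_conjTranspose_same _
  set Q := CFC.sqrt S.adjugate with hQ
  have hQpsd : Q.PosSemidef := (CFC.sqrt_nonneg S.adjugate).posSemidef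
  have hQherm : Qᴴ = Q := hQpsd.1
  have hC : (Q * T * Q).PosSemidef := by
    have := hT.mul_mul_conjTranspose_same Q
    rwa [hQherm] at this
  have htrace : (Q * T * Q).trace = (S.adjugate * T).trace := by
    rw [Matrix.trace_mul_cycle, CFC.sqrt_mul_sqrt_self S.adjugate hA.nonneg]
  have hdet : (Q * T * Q).det = S.det * T.det := by
    rw [Matrix.det_mul, Matrix.det_mul]
    have h1 : Q.det * Q.det = S.adjugate.det := by rw [← Matrix.det_mul, CFC.sqrt_mul_sqrt_self S.adjugate hA.nonneg]
    have hda : S.adjugate.det = S.det := by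
      rw [Matrix.det_adjugate]; norm_num
    linear_combination T.det * h1 + T.det * hda
  obtain ⟨h00, h11, hsym, hd⟩ := psd2 hC
  have htr2 : (Q * T * Q).trace = (Q*T*Q) 0 0 + (Q*T*Q) 1 1 := by
    simp [Matrix.trace, Fin.sum_univ_two]
  have hdet2 : (Q * T * Q).det = (Q*T*Q) 0 0 * (Q*T*Q) 1 1 - (Q*T*Q) 0 1 * (Q*T*Q) 1 0 := by
    rw [Matrix.det_fin_two]
  constructor
  · rw [← htrace, htr2]; linarith
  · have e2 : S.det * T.det
        = (Q*T*Q) 0 0 * (Q*T*Q) 1 1 - (Q*T*Q) 1 0 ^ 2 := by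
      rw [← hdet, hdet2, hsym]; ring
    rw [← htrace, htr2]
    nlinarith [e2, hd, sq_nonneg ((Q*T*Q) 0 0 - (Q*T*Q) 1 1)]

/-- Purely scalar core inequality. -/
lemma core_ineq {n s u τ r : ℝ} (hn : 0 < n) (hs : 0 ≤ s) (hu : 0 ≤ u) (hτ : 0 ≤ τ)
    (hr2 : r ^ 2 = n * u) (hτ2 : 4 * s * u ≤ τ ^ 2) (hyp : n < s + u + τ + 2 * r) :
    0 ≤ u + τ + 2 * r := by
  by_contra hc
  push_neg at hc
  have hsn : n < s := by linarith
  have h1 : (u + τ) ^ 2 < 4 * n * u := by nlinarith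
  rcases eq_or_lt_of_le hu with hu0 | hu0
  · have h2 : r ^ 2 = 0 := by rw [hr2, ← hu0]; ring
    have hr0 : r = 0 := by nlinarith [sq_nonneg r]
    rw [hr0, ← hu0] at hc
    linarith
  · nlinarith [mul_pos hu0 (lt_trans hn hsn), mul_nonneg hu hτ]

lemma det_add_trace (S T : Matrix (Fin 2) (Fin 2) ℝ) :
    (S + T).det = S.det + T.det + (S.adjugate * T).trace := by
  simp [Matrix.det_fin_two, Matrix.adjugate_fin_two, Matrix.trace_fin_two,
    Matrix.mul_apply, Fin.sum_univ_two, Matrix.add_apply, Matrix.vecMul, dotProduct]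
  ring

/-- Key lemma: a PSD 4×4 block matrix satisfies `det P ≤ det N (det M + 2 det R)`
provided `det N < det M + 2 det R`. -/
lemma key_block (N R M : Matrix (Fin 2) (Fin 2) ℝ)
    (hP : (fromBlocks N R Rᵀ M).PosSemidef)
    (hlt : N.det < M.det + 2 * R.det) :
    (fromBlocks N R Rᵀ M).det ≤ N.det * (M.det + 2 * R.det) := by
  have hN : N.PosSemidef := hP.submatrix Sum.inl
  have hNd : 0 ≤ N.det := det2_nonneg hN
  rcases eq_or_lt_of_le hNd with h0 | hn
  · -- N.det = 0 : P is singular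
    obtain ⟨v, hv, hNv⟩ := (Matrix.exists_mulVec_eq_zero_iff).mpr h0.symm
    obtain ⟨U, hU⟩ := CStarAlgebra.nonneg_iff_eq_star_mul_self.mp hP.nonneg
    rw [Matrix.star_eq_conjTranspose, Matrix.conjTranspose_eq_transpose_of_trivial] at hU
    set x : (Fin 2 ⊕ Fin 2) → ℝ := Sum.elim v 0 with hx
    have hx0 : x ≠ 0 := by
      intro h
      apply hv
      funext i
      exact congrFun h (Sum.inl i)
    have hform : x ⬝ᵥ (fromBlocks N R Rᵀ M) *ᵥ x = 0 := by
      rw [hx, Matrix.fromBlocks_mulVec, sumElim_dotProduct_sumElim]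
      simp [hNv]
    have hUx : U *ᵥ x = 0 := by
      rw [hU, ← Matrix.mulVec_mulVec, Matrix.dotProduct_mulVec, Matrix.vecMul_transpose] at hform
      exact dotProduct_self_eq_zero.mp hform
    have hPx : (fromBlocks N R Rᵀ M) *ᵥ x = 0 := by
      rw [hU, ← Matrix.mulVec_mulVec, hUx, Matrix.mulVec_zero]
    have hdet0 : (fromBlocks N R Rᵀ M).det = 0 :=
      Matrix.exists_mulVec_eq_zero_iff.mp ⟨x, hx0, hPx⟩
    rw [hdet0, ← h0]
    simp
  · -- N positive definite
    have hNpd : N.PosDef := posdef2 hN hn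
    haveI : Invertible N := hNpd.isUnit.invertible
    have hRH : Rᴴ = Rᵀ := Matrix.conjTranspose_eq_transpose_of_trivial R
    set S := M - Rᵀ * N⁻¹ * R with hS
    have hSchur : S.PosSemidef := by
      have := (Matrix.PosDef.fromBlocks₁₁ R M hNpd).mp ?_
      · rwa [hRH] at this
      · rwa [hRH]
    set T := Rᵀ * N⁻¹ * R with hT
    have hTpsd : T.PosSemidef := by
      have := (hNpd.inv.posSemidef).conjTranspose_mul_mul_same R
      rwa [hRH] at this
    have hdetP : (fromBlocks N R Rᵀ M).det = N.det * S.det := by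
      rw [Matrix.det_fromBlocks₁₁, invOf_eq_nonsing_inv]
    have hMeq : M = S + T := by rw [hS]; abel
    have hu : T.det = R.det ^ 2 * N.det⁻¹ := by
      rw [hT, Matrix.det_mul, Matrix.det_mul, Matrix.det_nonsing_inv, Matrix.det_transpose,
        Ring.inverse_eq_inv']
      ring
    have hr2 : R.det ^ 2 = N.det * T.det := by
      rw [hu]
      field_simp
    obtain ⟨hτ0, hτ2⟩ := tau_facts hSchur hTpsd
    have hm : M.det = S.det + T.det + (S.adjugate * T).trace := by
      rw [hMeq, det_add_trace]
    have hcore : 0 ≤ T.det + (S.adjugate * T).trace + 2 * R.det := by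
      refine core_ineq hn (det2_nonneg hSchur) (det2_nonneg hTpsd) hτ0 hr2 ?_ ?_
      · linarith [hτ2]
      · rw [hm] at hlt; linarith
    rw [hdetP, hm]
    linarith [mul_le_mul_of_nonneg_left hcore hNd]

/-- Real positive semidefiniteness from the covariance-matrix condition. -/
lemma real_psd {V : Matrix (Fin 2 ⊕ Fin 2) (Fin 2 ⊕ Fin 2) ℝ} (hV : IsCovMat V) :
    V.PosSemidef := by
  rw [Matrix.posSemidef_iff_dotProduct_mulVec]
  constructor
  · rw [Matrix.IsHermitian, Matrix.conjTranspose_eq_transpose_of_trivial]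
    exact hV.1
  · intro x
    have h := hV.2.dotProduct_mulVec_nonneg (fun i => (x i : ℂ))
    set y : (Fin 2 ⊕ Fin 2) → ℂ := fun i => (x i : ℂ) with hy
    have hstar : star y = y := by
      funext i
      simp [hy, Complex.conj_ofReal]
    rw [hstar, Matrix.add_mulVec, dotProduct_add] at h
    have h1 : y ⬝ᵥ (V.map Complex.ofReal) *ᵥ y = ((x ⬝ᵥ V *ᵥ x : ℝ) : ℂ) := by
      have hm : (V.map Complex.ofReal) *ᵥ y = fun i => ((V *ᵥ x) i : ℂ) := by
        funext i
        have h' := RingHom.map_mulVec Complex.ofRealHom V x i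
        exact h'.symm
      rw [hm]
      have := RingHom.map_dotProduct Complex.ofRealHom x (V *ᵥ x)
      exact this.symm
    have h2 : y ⬝ᵥ (Complex.I • J4.map Complex.ofReal) *ᵥ y
        = Complex.I * ((x ⬝ᵥ J4 *ᵥ x : ℝ) : ℂ) := by
      rw [Matrix.smul_mulVec, dotProduct_smul]
      congr 1
      have hm : (J4.map Complex.ofReal) *ᵥ y = fun i => ((J4 *ᵥ x) i : ℂ) := by
        funext i
        have h' := RingHom.map_mulVec Complex.ofRealHom J4 x i
        exact h'.symm
      rw [hm]
      have := RingHom.map_dotProduct Complex.ofRealHom x (J4 *ᵥ x)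
      exact this.symm
    rw [h1, h2] at h
    have hre := (Complex.le_def.mp h).1
    simpa using hre

lemma blocks_eq (A B C : Matrix (Fin 2) (Fin 2) ℝ) (hAs : Aᵀ = A) (hBs : Bᵀ = B) :
    (fromBlocks Z2 1 Z2 (-1)) * (fromBlocks A C Cᵀ B) * (fromBlocks Z2 1 Z2 (-1))ᵀ
    = fromBlocks (Z2*A*Z2 + Z2*C + Cᵀ*Z2 + B) (Z2*A*Z2 + Cᵀ*Z2 - Z2*C - B)
        (Z2*A*Z2 + Cᵀ*Z2 - Z2*C - B)ᵀ (Z2*A*Z2 - Z2*C - Cᵀ*Z2 + B) := by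
  rw [Matrix.fromBlocks_transpose, Matrix.fromBlocks_multiply, Matrix.fromBlocks_multiply]
  congr 1 <;>
    simp only [Matrix.transpose_add, Matrix.transpose_sub, Matrix.transpose_mul,
      Matrix.transpose_transpose, Matrix.transpose_one, Matrix.transpose_neg,
      Z2_transpose, hAs, hBs] <;>
    noncomm_ring

lemma sigma_id (A B C : Matrix (Fin 2) (Fin 2) ℝ) (hA : Aᵀ = A) (hB : Bᵀ = B) :
    (Z2*A*Z2 + Z2*C + Cᵀ*Z2 + B).det + (Z2*A*Z2 - Z2*C - Cᵀ*Z2 + B).det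
      + 2 * (Z2*A*Z2 + Cᵀ*Z2 - Z2*C - B).det
    = 4 * (A.det + B.det - 2 * C.det) := by
  have ha : A 1 0 = A 0 1 := by
    have := congrFun (congrFun hA 1) 0
    simpa using this.symm
  have hb : B 1 0 = B 0 1 := by
    have := congrFun (congrFun hB 1) 0
    simpa using this.symm
  simp only [Matrix.det_fin_two, Matrix.add_apply, Matrix.sub_apply, Matrix.mul_apply,
    Matrix.transpose_apply, Fin.sum_univ_two, Z2]
  simp
  rw [ha, hb]
  ring

lemma K_det : (fromBlocks Z2 1 Z2 (-1) : Matrix (Fin 2 ⊕ Fin 2) (Fin 2 ⊕ Fin 2) ℝ).det = -4 := by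
  haveI : Invertible Z2 := invertibleOfRightInverse _ _ Z2_mul_Z2
  rw [Matrix.det_fromBlocks₁₁]
  have hinv : ⅟Z2 = Z2 := invOf_eq_right_inv Z2_mul_Z2
  have he : (-1 - Z2 * ⅟Z2 * 1 : Matrix (Fin 2) (Fin 2) ℝ) = (-2 : ℝ) • 1 := by
    rw [hinv, Z2_mul_Z2]
    ext i j
    fin_cases i <;> fin_cases j <;> simp [Matrix.one_apply] <;> norm_num
  rw [he, Matrix.det_smul, Matrix.det_one]
  have : Z2.det = -1 := by rw [Z2, Matrix.det_fin_two_of]; norm_num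
  rw [this]
  norm_num

/-- Main structural facts about the noise matrix. -/
lemma structural (V : Matrix (Fin 2 ⊕ Fin 2) (Fin 2 ⊕ Fin 2) ℝ) (hV : IsCovMat V) :
    (noiseMat V).PosSemidef ∧
    ((noiseMat V).det < 2 * SigmaV V →
      16 * V.det ≤ (noiseMat V).det * (4 * SigmaV V - (noiseMat V).det)) := by
  have hAs : (V.toBlocks₁₁)ᵀ = V.toBlocks₁₁ := by
    ext i j
    have := congrFun (congrFun hV.1 (Sum.inl j)) (Sum.inl i)
    simpa [Matrix.toBlocks₁₁] using this.symm
  have hBs : (V.toBlocks₂₂)ᵀ = V.toBlocks₂₂ := by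
    ext i j
    have := congrFun (congrFun hV.1 (Sum.inr j)) (Sum.inr i)
    simpa [Matrix.toBlocks₂₂] using this.symm
  have hVblocks : V = fromBlocks V.toBlocks₁₁ V.toBlocks₁₂ (V.toBlocks₁₂)ᵀ V.toBlocks₂₂ := by
    have h21 : V.toBlocks₂₁ = (V.toBlocks₁₂)ᵀ := by
      ext i j
      have := congrFun (congrFun hV.1 (Sum.inl j)) (Sum.inr i)
      simpa [Matrix.toBlocks₂₁, Matrix.toBlocks₁₂] using this
    rw [← h21, Matrix.fromBlocks_toBlocks]
  set A := V.toBlocks₁₁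
  set C := V.toBlocks₁₂
  set B := V.toBlocks₂₂
  set K : Matrix (Fin 2 ⊕ Fin 2) (Fin 2 ⊕ Fin 2) ℝ := fromBlocks Z2 1 Z2 (-1) with hK
  set NN := Z2*A*Z2 + Z2*C + Cᵀ*Z2 + B with hNN
  set RR := Z2*A*Z2 + Cᵀ*Z2 - Z2*C - B with hRR
  set MM := Z2*A*Z2 - Z2*C - Cᵀ*Z2 + B with hMM
  have hPeq : K * V * Kᵀ = fromBlocks NN RR RRᵀ MM := by
    rw [hK]
    nth_rewrite 1 [hVblocks]
    exact blocks_eq A B C hAs hBs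
  have hPpsd : (fromBlocks NN RR RRᵀ MM).PosSemidef := by
    rw [← hPeq]
    have := (real_psd hV).mul_mul_conjTranspose_same K
    rwa [Matrix.conjTranspose_eq_transpose_of_trivial] at this
  have hNeq : noiseMat V = NN := rfl
  constructor
  · rw [hNeq]
    exact hPpsd.submatrix Sum.inl
  · intro hlt
    have hsig : NN.det + MM.det + 2 * RR.det = 4 * SigmaV V := by
      rw [hNN, hMM, hRR]
      exact sigma_id A B C hAs hBs
    have hlt' : NN.det < MM.det + 2 * RR.det := by
      rw [hNeq] at hlt
      linarith
    have hkb := key_block NN RR MM hPpsd hlt'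
    have hdetP : (fromBlocks NN RR RRᵀ MM).det = 16 * V.det := by
      rw [← hPeq, Matrix.det_mul, Matrix.det_mul, Matrix.det_transpose, K_det]
      ring
    rw [hdetP] at hkb
    have hMR : MM.det + 2 * RR.det = 4 * SigmaV V - NN.det := by linarith
    rw [hMR] at hkb
    rw [hNeq]
    exact hkb

/-- upper bound on the teleportation fidelity. -/
theorem fidelity_upper_bound (V : Matrix (Fin 2 ⊕ Fin 2) (Fin 2 ⊕ Fin 2) ℝ)
    (hV : IsCovMat V) (hnu : nuPT V ≤ 1) :
    Fid V ≤ 1 / (1 + nuPT V) := by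
  obtain ⟨hNpsd, hkey⟩ := structural V hV
  obtain ⟨h00, h11, hsym, hcross⟩ := psd2 hNpsd
  have hn : 0 ≤ (noiseMat V).det := det2_nonneg hNpsd
  have htr : (noiseMat V).trace = noiseMat V 0 0 + noiseMat V 1 1 := Matrix.trace_fin_two _
  have hν0 : 0 ≤ nuPT V := Real.sqrt_nonneg _
  -- N.det ≥ 4 ν²
  have hν2 : 4 * (nuPT V)^2 ≤ (noiseMat V).det := by
    rcases le_or_gt ((SigmaV V - Real.sqrt ((SigmaV V)^2 - 4 * V.det)) / 2) 0 with hx | hx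
    · have h0 : nuPT V = 0 := Real.sqrt_eq_zero'.mpr hx
      rw [h0]
      simpa using hn
    · have hsq : (nuPT V)^2 = (SigmaV V - Real.sqrt ((SigmaV V)^2 - 4 * V.det)) / 2 := by
        rw [nuPT]
        exact Real.sq_sqrt hx.le
      rw [hsq]
      rcases le_or_gt (2 * SigmaV V) ((noiseMat V).det) with hge | hlt
      · have hs0 : 0 ≤ Real.sqrt ((SigmaV V)^2 - 4 * V.det) := Real.sqrt_nonneg _
        linarith
      · have hkey' := hkey hlt
        have hsqle : (SigmaV V - (noiseMat V).det / 2)^2 ≤ (SigmaV V)^2 - 4 * V.det := by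
          nlinarith
        have hle : SigmaV V - (noiseMat V).det / 2 ≤ Real.sqrt ((SigmaV V)^2 - 4 * V.det) :=
          Real.le_sqrt_of_sq_le hsqle
        linarith
  -- trace ≥ 2 √(det)
  have hνn : 2 * nuPT V ≤ Real.sqrt (noiseMat V).det := by
    apply Real.le_sqrt_of_sq_le
    nlinarith
  have htrn : 2 * Real.sqrt (noiseMat V).det ≤ (noiseMat V).trace := by
    have h1 : Real.sqrt (noiseMat V).det ≤ (noiseMat V 0 0 + noiseMat V 1 1) / 2 := by
      rw [show (noiseMat V 0 0 + noiseMat V 1 1)/2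
          = Real.sqrt (((noiseMat V 0 0 + noiseMat V 1 1)/2)^2) from
        (Real.sqrt_sq (by linarith)).symm]
      apply Real.sqrt_le_sqrt
      rw [Matrix.det_fin_two, hsym]
      nlinarith [hcross, sq_nonneg (noiseMat V 0 0 - noiseMat V 1 1),
        sq_nonneg (noiseMat V 1 0)]
    rw [htr]
    linarith
  have hbound : (2 + 2 * nuPT V)^2 ≤ 4 + 2 * (noiseMat V).trace + (noiseMat V).det := by
    nlinarith [hνn, htrn, hν2, Real.sqrt_nonneg (noiseMat V).det, hν0]
  have hpos2 : (0:ℝ) < 2 + 2 * nuPT V := by linarith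
  have hs : 2 + 2 * nuPT V ≤ Real.sqrt (4 + 2 * (noiseMat V).trace + (noiseMat V).det) := by
    rw [show (2 + 2*nuPT V : ℝ) = Real.sqrt ((2 + 2*nuPT V)^2) from
      (Real.sqrt_sq hpos2.le).symm]
    exact Real.sqrt_le_sqrt hbound
  have hmain : Fid V ≤ 2 / (2 + 2 * nuPT V) := by
    rw [Fid]
    exact div_le_div_of_nonneg_left (by norm_num) hpos2 hs
  have heq : (2:ℝ) / (2 + 2 * nuPT V) = 1 / (1 + nuPT V) := by
    have h1 : (1:ℝ) + nuPT V ≠ 0 := by linarith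
    field_simp
  rw [heq] at hmain
  exact hmain

end
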